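/- Let C be a symmetric monoidal closed, complete, well-powered category with a small cogenerating family, and let F : C → C be a covariant endofunctor. Then the end ∫_X X^{F(X)} of the bifunctor (X,Y) ↦ Y^{F(X)} : C^op × C → C exists. -/

import Mathlib

open CategoryTheory CategoryTheory.Limits CategoryTheory.MonoidalCategory
  CategoryTheory.MonoidalClosed Opposite

universe v u

namespace HasEndAux

variable {C : Type u} [Category.{v} C]

noncomputable instance csInfV [HasLimits C] [WellPowered.{v} C] {B : C} : CompleteSemilatticeInf (Subobject B) :=
  Subobject.completeSemilatticeInf.{v}

/-- Factoring through an `sInf` of subobjects. -/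
theorem sInf_factors [WellPowered.{v} C] [HasLimits C] {L A : C} (s : Set (Subobject L))
    (f : A ⟶ L) (h : ∀ P ∈ s, P.Factors f) : (sInf s).Factors f := by
  show (Subobject.mk (Subobject.widePullbackι.{v} s)).Factors f
  have mem : ∀ j : (equivShrink.{v} (Subobject L) '' s : Set (Shrink.{v} (Subobject L))),
      ((equivShrink.{v} (Subobject L)).symm ↑j) ∈ s := by
    rintro ⟨j, P, hP, rfl⟩
    simpa using hP
  refine ⟨limit.lift (Subobject.wideCospan.{v} s) (WidePullbackShape.mkCone (F := Subobject.wideCospan.{v} s) f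
      (fun j => Subobject.factorThru _ f (h _ (mem j))) (fun j => ?_)), ?_⟩
  · exact Subobject.factorThru_arrow _ _ _
  · exact limit.lift_π (F := Subobject.wideCospan.{v} s) _ none

noncomputable section

variable [MonoidalCategory C] [MonoidalClosed C] [HasLimits C] [WellPowered.{v} C]
variable (𝒢 : Set C) [Small.{v} 𝒢] (F : C ⥤ C)

/-- The object of `C` underlying a shrink-index. -/
def gOb (g : Shrink.{v} 𝒢) : C := (((equivShrink 𝒢).symm g : 𝒢) : C)

lemma gOb_mem (g : Shrink.{v} 𝒢) : gOb 𝒢 g ∈ 𝒢 := ((equivShrink 𝒢).symm g).2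

/-- joint monomorphicity of the maps `[Z, X] → [Z, G]`. -/
lemma jointly_mono (h𝒢 : ObjectProperty.IsCoseparating (fun X => X ∈ 𝒢)) {X W Z : C} {a b : W ⟶ (ihom Z).obj X}
    (h : ∀ (g : Shrink.{v} 𝒢) (u : X ⟶ gOb 𝒢 g),
      a ≫ (ihom Z).map u = b ≫ (ihom Z).map u) : a = b := by
  apply uncurry_injective
  apply h𝒢
  intro G hG u
  have ec : (G : C) = gOb 𝒢 (equivShrink 𝒢 ⟨G, hG⟩) := by
    simp [gOb]
  have h' := h (equivShrink 𝒢 ⟨G, hG⟩) (u ≫ eqToHom ec)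
  have h'' := congrArg (· ≫ (ihom Z).map (eqToHom ec.symm)) h'
  simp only [Category.assoc, ← Functor.map_comp] at h''
  simp only [Category.assoc, eqToHom_trans, eqToHom_refl, Category.comp_id] at h''
  rw [← uncurry_natural_right, ← uncurry_natural_right, h'']

/-- The ambient product `∏_{G ∈ 𝒢} [F G, G]`. -/
abbrev EL : C := ∏ᶜ fun g : Shrink.{v} 𝒢 => (ihom (F.obj (gOb 𝒢 g))).obj (gOb 𝒢 g)

/-- The target of the comparison maps for `X`. -/
abbrev QX (X : C) : C :=
  ∏ᶜ fun i : Σ g : Shrink.{v} 𝒢, (X ⟶ gOb 𝒢 g) => (ihom (F.obj X)).obj (gOb 𝒢 i.1)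

/-- The canonical map `[F X, X] ⟶ Q X`. -/
def tX (X : C) : (ihom (F.obj X)).obj X ⟶ QX 𝒢 F X :=
  Pi.lift fun i => (ihom (F.obj X)).map i.2

/-- The canonical map `L ⟶ Q X`. -/
def qX (X : C) : EL 𝒢 F ⟶ QX 𝒢 F X :=
  Pi.lift fun i => Pi.π _ i.1 ≫ (MonoidalClosed.pre (F.map i.2)).app (gOb 𝒢 i.1)

lemma mono_tX (h𝒢 : ObjectProperty.IsCoseparating (fun X => X ∈ 𝒢)) (X : C) : Mono (tX 𝒢 F X) := by
  constructor
  intro W a b hab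
  apply jointly_mono 𝒢 h𝒢
  intro g u
  have := congrArg (· ≫ Pi.π _ (⟨g, u⟩ : Σ g : Shrink.{v} 𝒢, (X ⟶ gOb 𝒢 g))) hab
  simpa [tX] using this

variable (h𝒢 : ObjectProperty.IsCoseparating (fun X => X ∈ 𝒢))

/-- The subobject of `L` cut out by the condition at `X`. -/
abbrev TX (X : C) : Subobject (EL 𝒢 F) :=
  haveI := mono_tX 𝒢 F h𝒢 X
  Subobject.mk (pullback.snd (tX 𝒢 F X) (qX 𝒢 F X))

/-- The end, as a subobject of `L`. -/
def EE : Subobject (EL 𝒢 F) := sInf (Set.range (fun X => TX 𝒢 F h𝒢 X))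

/-- The structure maps of the end. -/
def ePi (X : C) : (EE 𝒢 F h𝒢 : C) ⟶ (ihom (F.obj X)).obj X :=
  haveI := mono_tX 𝒢 F h𝒢 X
  Subobject.ofLE _ _ (sInf_le ⟨X, rfl⟩) ≫
    (Subobject.underlyingIso (pullback.snd (tX 𝒢 F X) (qX 𝒢 F X))).hom ≫ pullback.fst _ _

lemma ePi_tX (X : C) :
    ePi 𝒢 F h𝒢 X ≫ tX 𝒢 F X = (EE 𝒢 F h𝒢).arrow ≫ qX 𝒢 F X := by
  haveI := mono_tX 𝒢 F h𝒢 X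
  have h1 : (Subobject.underlyingIso (pullback.snd (tX 𝒢 F X) (qX 𝒢 F X))).hom ≫
      pullback.snd (tX 𝒢 F X) (qX 𝒢 F X) = (TX 𝒢 F h𝒢 X).arrow :=
    Subobject.underlyingIso_hom_comp_eq_mk _
  have h2 : Subobject.ofLE (EE 𝒢 F h𝒢) (TX 𝒢 F h𝒢 X) (sInf_le ⟨X, rfl⟩) ≫
      (TX 𝒢 F h𝒢 X).arrow = (EE 𝒢 F h𝒢).arrow := Subobject.ofLE_arrow _
  rw [ePi]
  simp only [Category.assoc, pullback.condition]
  rw [← Category.assoc (Subobject.underlyingIso _).hom, h1, ← Category.assoc, h2]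

lemma star_comp (X : C) (i : Σ g : Shrink.{v} 𝒢, (X ⟶ gOb 𝒢 g)) :
    ePi 𝒢 F h𝒢 X ≫ (ihom (F.obj X)).map i.2 =
      (EE 𝒢 F h𝒢).arrow ≫ Pi.π _ i.1 ≫ (MonoidalClosed.pre (F.map i.2)).app (gOb 𝒢 i.1) := by
  have := congrArg (· ≫ Pi.π _ i) (ePi_tX 𝒢 F h𝒢 X)
  simpa [tX, qX] using this

lemma ePi_g (g : Shrink.{v} 𝒢) :
    ePi 𝒢 F h𝒢 (gOb 𝒢 g) = (EE 𝒢 F h𝒢).arrow ≫ Pi.π _ g := by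
  have := star_comp 𝒢 F h𝒢 (gOb 𝒢 g) ⟨g, 𝟙 _⟩
  simpa [MonoidalClosed.pre_id] using this

lemma ePi_natural {X Y : C} (f : X ⟶ Y) :
    ePi 𝒢 F h𝒢 X ≫ (ihom (F.obj X)).map f =
      ePi 𝒢 F h𝒢 Y ≫ (MonoidalClosed.pre (F.map f)).app Y := by
  apply jointly_mono 𝒢 h𝒢
  intro g u
  have l1 := star_comp 𝒢 F h𝒢 X ⟨g, f ≫ u⟩
  have l2 := star_comp 𝒢 F h𝒢 Y ⟨g, u⟩
  have nat := (MonoidalClosed.pre (F.map f)).naturality u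
  calc (ePi 𝒢 F h𝒢 X ≫ (ihom (F.obj X)).map f) ≫ (ihom (F.obj X)).map u
      = ePi 𝒢 F h𝒢 X ≫ (ihom (F.obj X)).map (f ≫ u) := by
        rw [Functor.map_comp, Category.assoc]
    _ = (EE 𝒢 F h𝒢).arrow ≫ Pi.π _ g ≫ (MonoidalClosed.pre (F.map (f ≫ u))).app (gOb 𝒢 g) := l1
    _ = (EE 𝒢 F h𝒢).arrow ≫ Pi.π _ g ≫ (MonoidalClosed.pre (F.map u)).app (gOb 𝒢 g) ≫
          (MonoidalClosed.pre (F.map f)).app (gOb 𝒢 g) := by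
        rw [Functor.map_comp, MonoidalClosed.pre_map, NatTrans.comp_app]
    _ = (ePi 𝒢 F h𝒢 Y ≫ (ihom (F.obj Y)).map u) ≫ (MonoidalClosed.pre (F.map f)).app (gOb 𝒢 g) := by
        rw [l2]; simp only [Category.assoc]
    _ = (ePi 𝒢 F h𝒢 Y ≫ (MonoidalClosed.pre (F.map f)).app Y) ≫ (ihom (F.obj X)).map u := by
        simp only [Category.assoc, nat]

end

end HasEndAux

open HasEndAux

/-- If `C` is a symmetric monoidal closed, complete, well-powered category with a small
cogenerating family, then for any endofunctor `F : C ⥤ C` the end `∫_X X^{F(X)}` of the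
bifunctor `(X, Y) ↦ Y^{F(X)}` exists. -/
theorem hasEnd_ihom_comp {C : Type u} [Category.{v} C] [MonoidalCategory C]
    [SymmetricCategory C] [MonoidalClosed C] [HasLimits C] [WellPowered.{v} C]
    (𝒢 : Set C) [Small.{v} 𝒢] (h𝒢 : ObjectProperty.IsCoseparating (fun X => X ∈ 𝒢)) (F : C ⥤ C) :
    HasEnd (F.op ⋙ MonoidalClosed.internalHom) := by
  have hqt : ∀ (E : Wedge (F.op ⋙ MonoidalClosed.internalHom)) (X : C),
      E.ι X ≫ tX 𝒢 F X =
        (Pi.lift (f := fun g => (ihom (F.obj (gOb 𝒢 g))).obj (gOb 𝒢 g))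
          (fun g => E.ι (gOb (C := C) 𝒢 g))) ≫ qX 𝒢 F X := by
    intro E X
    apply Pi.hom_ext
    intro i
    simp only [tX, qX, Category.assoc, limit.lift_π, Fan.mk_π_app]
    erw [Category.assoc, Pi.lift_π, Pi.lift_π_assoc]
    exact E.condition i.2
  have hfac : ∀ E : Wedge (F.op ⋙ MonoidalClosed.internalHom),
      (EE 𝒢 F h𝒢).Factors (Pi.lift (f := fun g => (ihom (F.obj (gOb 𝒢 g))).obj (gOb 𝒢 g))
        (fun g => E.ι (gOb (C := C) 𝒢 g))) := by
    intro E
    apply sInf_factors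
    rintro P ⟨X, rfl⟩
    haveI := mono_tX 𝒢 F h𝒢 X
    exact ⟨pullback.lift (E.ι X) _ (hqt E X), pullback.lift_snd _ _ _⟩
  refine HasLimit.mk ⟨Wedge.mk ((EE 𝒢 F h𝒢 : C)) (fun X => ePi 𝒢 F h𝒢 X)
    (fun i j f => ePi_natural 𝒢 F h𝒢 f),
    Multifork.IsLimit.mk _
      (fun E => (EE 𝒢 F h𝒢).factorThru _ (hfac E))
      (fun E X => ?_) (fun E m hm => ?_)⟩
  · change C at X
    haveI := mono_tX 𝒢 F h𝒢 X
    show (EE 𝒢 F h𝒢).factorThru _ (hfac E) ≫ ePi 𝒢 F h𝒢 X = E.ι X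
    apply (cancel_mono (tX 𝒢 F X)).1
    simp only [Wedge.mk_ι, Category.assoc, ePi_tX]
    rw [← Category.assoc, Subobject.factorThru_arrow]
    exact (hqt E X).symm
  · apply (cancel_mono (EE 𝒢 F h𝒢).arrow).1
    simp only [Subobject.factorThru_arrow]
    apply Pi.hom_ext
    intro g
    erw [Category.assoc, ← ePi_g 𝒢 F h𝒢 g, Pi.lift_π]
    exact hm (gOb (C := C) 𝒢 g)
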